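/- Let G be an even-tempered well-tempered scoring game such that every option of G satisfies gap_0 = 0, and L(G) ≤ R(G). Then G ≈_+ R(G) and G ≈_- L(G), i.e., Lf(G + X) = R(G) + Lf(X) and Rf(G + X) = L(G) + Rf(X) for every well-tempered game X. -/

import Mathlib

/-- Well-tempered scoring game trees: an integer (final score) or a position
with lists of Left and Right options. -/
inductive WT : Type where
  | int : ℤ → WT
  | node : List WT → List WT → WT

namespace WT

/-- Left options. -/
def lopts : WT → List WT
  | int _ => []
  | node L _ => L

/-- Right options. -/
def ropts : WT → List WT
  | int _ => []
  | node _ R => R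

theorem sizeOf_lt_of_mem_lopts : ∀ {G g : WT}, g ∈ G.lopts → sizeOf g < sizeOf G := by
  intro G g h
  cases G with
  | int n => simp [lopts] at h
  | node L R =>
    simp only [lopts] at h
    have h1 := List.sizeOf_lt_of_mem h
    have h2 : sizeOf (WT.node L R) = 1 + sizeOf L + sizeOf R := by simp
    omega

theorem sizeOf_lt_of_mem_ropts : ∀ {G g : WT}, g ∈ G.ropts → sizeOf g < sizeOf G := by
  intro G g h
  cases G with
  | int n => simp [ropts] at h
  | node L R =>
    simp only [ropts] at h
    have h1 := List.sizeOf_lt_of_mem h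
    have h2 : sizeOf (WT.node L R) = 1 + sizeOf L + sizeOf R := by simp
    omega

/-- Disjunctive sum of two games. -/
def add (G H : WT) : WT :=
  match G, H with
  | int m, int n => int (m + n)
  | G, H =>
    node ((G.lopts.attach.map fun g => add g.1 H) ++ (H.lopts.attach.map fun h => add G h.1))
         ((G.ropts.attach.map fun g => add g.1 H) ++ (H.ropts.attach.map fun h => add G h.1))
termination_by sizeOf G + sizeOf H
decreasing_by
  all_goals
    first
      | (have := sizeOf_lt_of_mem_lopts g.2; omega)
      | (have := sizeOf_lt_of_mem_lopts h.2; omega)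
      | (have := sizeOf_lt_of_mem_ropts g.2; omega)
      | (have := sizeOf_lt_of_mem_ropts h.2; omega)

/-- Negation of a game: swap players and negate scores. -/
def neg : WT → WT
  | int n => int (-n)
  | node L R =>
    node ((WT.node L R).ropts.attach.map fun g => neg g.1)
         ((WT.node L R).lopts.attach.map fun g => neg g.1)
termination_by G => sizeOf G
decreasing_by
  all_goals
    first
      | exact sizeOf_lt_of_mem_lopts g.2
      | exact sizeOf_lt_of_mem_ropts g.2

def lmax : List ℤ → ℤ
  | [] => 0
  | x :: xs => xs.foldl max x

def lmin : List ℤ → ℤ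
  | [] => 0
  | x :: xs => xs.foldl min x

/-- The pair (left outcome, right outcome). -/
def out : WT → ℤ × ℤ
  | int n => (n, n)
  | node L R =>
    (lmax ((WT.node L R).lopts.attach.map fun g => (out g.1).2),
     lmin ((WT.node L R).ropts.attach.map fun g => (out g.1).1))
termination_by G => sizeOf G
decreasing_by
  all_goals
    first
      | exact sizeOf_lt_of_mem_lopts g.2
      | exact sizeOf_lt_of_mem_ropts g.2

/-- Left outcome L(G): optimal score when Left moves first. -/
def Lout (G : WT) : ℤ := G.out.1

/-- Right outcome R(G): optimal score when Right moves first. -/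
def Rout (G : WT) : ℤ := G.out.2

/-- `IsWT G p` : `G` is a well-tempered game of parity `p`
(`false` = even-tempered, `true` = odd-tempered). -/
inductive IsWT : WT → Bool → Prop where
  | int (n : ℤ) : IsWT (WT.int n) false
  | node {L R : List WT} {p : Bool} (hL : L ≠ []) (hR : R ≠ [])
      (hLp : ∀ g ∈ L, IsWT g p) (hRp : ∀ g ∈ R, IsWT g p) :
      IsWT (WT.node L R) (!p)

/-- `G` is a well-tempered game (of some parity). -/
def Wt (G : WT) : Prop := ∃ p, IsWT G p

/-- Parity, computed structurally (`false` = even-tempered, `true` = odd-tempered;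
agrees with `IsWT` on well-tempered games). -/
def par : WT → Bool
  | int _ => false
  | node [] _ => true
  | node (g :: _) _ => !(par g)

/-- Final score under optimal play when Left moves last. -/
def Lf (G : WT) : ℤ := if G.par then G.Lout else G.Rout

/-- Final score under optimal play when Right moves last. -/
def Rf (G : WT) : ℤ := if G.par then G.Rout else G.Lout

/-- `G ≲ H` : for every well-tempered `X`, `L(G+X) ≤ L(H+X)` and `R(G+X) ≤ R(H+X)`. -/
def Le (G H : WT) : Prop :=
  ∀ X : WT, X.Wt → (G.add X).Lout ≤ (H.add X).Lout ∧ (G.add X).Rout ≤ (H.add X).Rout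

/-- `G ≳ H`. -/
def Ge (G H : WT) : Prop := Le H G

/-- `G ≈ H` : equivalence of scoring games. -/
def Equiv (G H : WT) : Prop :=
  ∀ X : WT, X.Wt → (G.add X).Lout = (H.add X).Lout ∧ (G.add X).Rout = (H.add X).Rout

/-- `G` and `H` are well-tempered with the same parity. -/
def SamePar (G H : WT) : Prop := ∃ p, IsWT G p ∧ IsWT H p

/-- `G` takes values in `S`: every integer subgame lies in `S`. -/
inductive Valued (S : Set ℤ) : WT → Prop where
  | int {n : ℤ} : n ∈ S → Valued S (WT.int n)
  | node {L R : List WT} : (∀ g ∈ L, Valued S g) → (∀ g ∈ R, Valued S g) →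
      Valued S (WT.node L R)

/-- `Subgame H G` : `H` is a subgame of `G`. -/
inductive Subgame : WT → WT → Prop where
  | refl (G : WT) : Subgame G G
  | left {H G' : WT} {L R : List WT} : G' ∈ L → Subgame H G' → Subgame H (WT.node L R)
  | right {H G' : WT} {L R : List WT} : G' ∈ R → Subgame H G' → Subgame H (WT.node L R)

/-- `gap G p` : supremum of `R(H) - L(H)` over subgames `H` of `G` of parity `p`
(as an element of `WithBot ℤ`; the supremum of the empty set is `⊥ = -∞`). -/
noncomputable def gap (G : WT) (p : Bool) : WithBot ℤ :=
  sSup {x : WithBot ℤ | ∃ H : WT, Subgame H G ∧ IsWT H p ∧ x = ((H.Rout - H.Lout : ℤ) : WithBot ℤ)}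

/-- Heating by `t`. -/
def heat (t : ℤ) : WT → WT
  | int n => int n
  | node L R =>
    node ((WT.node L R).lopts.attach.map fun g => (WT.int t).add (heat t g.1))
         ((WT.node L R).ropts.attach.map fun g => (WT.int (-t)).add (heat t g.1))
termination_by G => sizeOf G
decreasing_by
  all_goals
    first
      | exact sizeOf_lt_of_mem_lopts g.2
      | exact sizeOf_lt_of_mem_ropts g.2

end WT

namespace WT

theorem lopts_node (L R : List WT) : lopts (node L R) = L := rfl
theorem ropts_node (L R : List WT) : ropts (node L R) = R := rfl

theorem out_node (L R : List WT) :
    out (node L R) = (lmax (L.map Rout), lmin (R.map Lout)) := by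
  rw [out]
  simp only [lopts, ropts]
  rw [List.attach_map_val (l := L) (f := fun g => g.out.2), List.attach_map_val (l := R) (f := fun g => g.out.1)]
  rfl

theorem Lout_node (L R : List WT) : Lout (node L R) = lmax (L.map Rout) := by
  rw [Lout, out_node]
theorem Rout_node (L R : List WT) : Rout (node L R) = lmin (R.map Lout) := by
  rw [Rout, out_node]
theorem Lout_int (n : ℤ) : Lout (int n) = n := by rw [Lout, out]
theorem Rout_int (n : ℤ) : Rout (int n) = n := by rw [Rout, out]

theorem int_add_int (m n : ℤ) : (int m).add (int n) = int (m + n) := by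
  rw [add.eq_def]

theorem node_add (L R : List WT) (H : WT) :
    (node L R).add H = node ((L.map (·.add H)) ++ (H.lopts.map ((node L R).add ·)))
      ((R.map (·.add H)) ++ (H.ropts.map ((node L R).add ·))) := by
  rw [add.eq_def]
  cases H with
  | int n =>
    simp only [lopts, ropts]
    rw [List.attach_map_val (l := L) (f := fun g => g.add (int n)), List.attach_map_val (l := R) (f := fun g => g.add (int n))]
    simp [lopts, ropts]
  | node L' R' =>
    simp only [lopts, ropts]
    rw [List.attach_map_val (l := L) (f := fun g => g.add (node L' R')), List.attach_map_val (l := R) (f := fun g => g.add (node L' R')),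
      List.attach_map_val (l := L') (f := fun h => (node L R).add h), List.attach_map_val (l := R') (f := fun h => (node L R).add h)]

theorem add_node (G : WT) (L R : List WT) :
    G.add (node L R) = node ((G.lopts.map (·.add (node L R))) ++ (L.map (G.add ·)))
      ((G.ropts.map (·.add (node L R))) ++ (R.map (G.add ·))) := by
  rw [add.eq_def]
  cases G with
  | int n =>
    simp only [lopts, ropts]
    rw [List.attach_map_val (l := L) (f := fun h => (int n).add h), List.attach_map_val (l := R) (f := fun h => (int n).add h)]
    simp [lopts, ropts]
  | node L' R' =>
    simp only [lopts, ropts]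
    rw [List.attach_map_val (l := L') (f := fun g => g.add (node L R)), List.attach_map_val (l := R') (f := fun g => g.add (node L R)),
      List.attach_map_val (l := L) (f := fun h => (node L' R').add h), List.attach_map_val (l := R) (f := fun h => (node L' R').add h)]

end WT
namespace WT

theorem foldl_max_le {b : ℤ} : ∀ (l : List ℤ) (a : ℤ), a ≤ b → (∀ x ∈ l, x ≤ b) → l.foldl max a ≤ b
  | [], a, ha, _ => ha
  | x :: xs, a, ha, h =>
    foldl_max_le xs (max a x) (max_le ha (h x (by simp))) (fun y hy => h y (by simp [hy]))

theorem le_foldl_max_init : ∀ (l : List ℤ) (a c : ℤ), c ≤ a → c ≤ l.foldl max a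
  | [], _, _, hc => hc
  | x :: xs, a, c, hc => le_foldl_max_init xs (max a x) c (le_trans hc (le_max_left a x))

theorem le_foldl_max_mem : ∀ (l : List ℤ) (a x : ℤ), x ∈ l → x ≤ l.foldl max a
  | y :: ys, a, x, hx => by
    rcases List.mem_cons.mp hx with h | h
    · subst h; exact le_foldl_max_init ys (max a x) x (le_max_right a x)
    · exact le_foldl_max_mem ys (max a y) x h

theorem lmax_le {l : List ℤ} {b : ℤ} (hne : l ≠ []) (h : ∀ x ∈ l, x ≤ b) : lmax l ≤ b := by
  cases l with
  | nil => exact absurd rfl hne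
  | cons x xs => exact foldl_max_le xs x (h x (by simp)) (fun y hy => h y (by simp [hy]))

theorem le_lmax {l : List ℤ} {x : ℤ} (hx : x ∈ l) : x ≤ lmax l := by
  cases l with
  | nil => simp at hx
  | cons y ys =>
    rcases List.mem_cons.mp hx with h | h
    · subst h; exact le_foldl_max_init ys x x le_rfl
    · exact le_foldl_max_mem ys y x h

theorem foldl_min_ge {b : ℤ} : ∀ (l : List ℤ) (a : ℤ), b ≤ a → (∀ x ∈ l, b ≤ x) → b ≤ l.foldl min a
  | [], a, ha, _ => ha
  | x :: xs, a, ha, h =>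
    foldl_min_ge xs (min a x) (le_min ha (h x (by simp))) (fun y hy => h y (by simp [hy]))

theorem foldl_min_le_init : ∀ (l : List ℤ) (a c : ℤ), a ≤ c → l.foldl min a ≤ c
  | [], _, _, hc => hc
  | x :: xs, a, c, hc => foldl_min_le_init xs (min a x) c (le_trans (min_le_left a x) hc)

theorem foldl_min_le_mem : ∀ (l : List ℤ) (a x : ℤ), x ∈ l → l.foldl min a ≤ x
  | y :: ys, a, x, hx => by
    rcases List.mem_cons.mp hx with h | h
    · subst h; exact foldl_min_le_init ys (min a x) x (min_le_right a x)
    · exact foldl_min_le_mem ys (min a y) x h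

theorem le_lmin {l : List ℤ} {b : ℤ} (hne : l ≠ []) (h : ∀ x ∈ l, b ≤ x) : b ≤ lmin l := by
  cases l with
  | nil => exact absurd rfl hne
  | cons x xs => exact foldl_min_ge xs x (h x (by simp)) (fun y hy => h y (by simp [hy]))

theorem lmin_le {l : List ℤ} {x : ℤ} (hx : x ∈ l) : lmin l ≤ x := by
  cases l with
  | nil => simp at hx
  | cons y ys =>
    rcases List.mem_cons.mp hx with h | h
    · subst h; exact foldl_min_le_init ys x x le_rfl
    · exact foldl_min_le_mem ys y x h

theorem lmax_mem : ∀ {l : List ℤ}, l ≠ [] → lmax l ∈ l := by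
  have key : ∀ (xs : List ℤ) (a : ℤ), xs.foldl max a = a ∨ xs.foldl max a ∈ xs := by
    intro xs
    induction xs with
    | nil => intro a; exact Or.inl rfl
    | cons x xs ih =>
      intro a
      rcases ih (max a x) with h | h
      · rcases max_choice a x with h' | h'
        · exact Or.inl (h.trans h')
        · exact Or.inr (by rw [List.foldl_cons, h, h']; exact List.mem_cons_self (a := x) (l := xs))
      · exact Or.inr (List.mem_cons_of_mem x h)
  intro l hne
  cases l with
  | nil => exact absurd rfl hne
  | cons x xs =>
    rcases key xs x with h | h
    · simp [lmax, h]
    · simp [lmax, List.mem_cons_of_mem, h]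

theorem lmin_mem : ∀ {l : List ℤ}, l ≠ [] → lmin l ∈ l := by
  have key : ∀ (xs : List ℤ) (a : ℤ), xs.foldl min a = a ∨ xs.foldl min a ∈ xs := by
    intro xs
    induction xs with
    | nil => intro a; exact Or.inl rfl
    | cons x xs ih =>
      intro a
      rcases ih (min a x) with h | h
      · rcases min_choice a x with h' | h'
        · exact Or.inl (h.trans h')
        · exact Or.inr (by rw [List.foldl_cons, h, h']; exact List.mem_cons_self (a := x) (l := xs))
      · exact Or.inr (List.mem_cons_of_mem x h)
  intro l hne
  cases l with
  | nil => exact absurd rfl hne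
  | cons x xs =>
    rcases key xs x with h | h
    · simp [lmin, h]
    · simp [lmin, List.mem_cons_of_mem, h]

end WT
namespace WT

theorem foldl_max_add : ∀ (l : List ℤ) (a n : ℤ), (l.map (· + n)).foldl max (a + n) = l.foldl max a + n
  | [], _, _ => rfl
  | x :: xs, a, n => by
    rw [List.map_cons, List.foldl_cons, List.foldl_cons, max_add_add_right]
    exact foldl_max_add xs (max a x) n

theorem foldl_min_add : ∀ (l : List ℤ) (a n : ℤ), (l.map (· + n)).foldl min (a + n) = l.foldl min a + n
  | [], _, _ => rfl
  | x :: xs, a, n => by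
    rw [List.map_cons, List.foldl_cons, List.foldl_cons, min_add_add_right]
    exact foldl_min_add xs (min a x) n

theorem lmax_add {l : List ℤ} (h : l ≠ []) (n : ℤ) : lmax (l.map (· + n)) = lmax l + n := by
  cases l with
  | nil => exact absurd rfl h
  | cons x xs => rw [List.map_cons]; exact foldl_max_add xs x n

theorem lmin_add {l : List ℤ} (h : l ≠ []) (n : ℤ) : lmin (l.map (· + n)) = lmin l + n := by
  cases l with
  | nil => exact absurd rfl h
  | cons x xs => rw [List.map_cons]; exact foldl_min_add xs x n

theorem add_int_out : ∀ (N : ℕ) (H : WT), sizeOf H ≤ N → ∀ (p : Bool), IsWT H p → ∀ n : ℤ,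
    (H.add (int n)).Lout = H.Lout + n ∧ (H.add (int n)).Rout = H.Rout + n := by
  intro N
  induction N with
  | zero => intro H hs; cases H <;> simp at hs
  | succ N ih =>
    intro H hs p hH n
    cases hH with
    | int m => rw [int_add_int]; simp [Lout_int, Rout_int]
    | @node L R p₀ hLne hRne hLp hRp =>
      rw [node_add]
      simp only [lopts, ropts, List.map_nil, List.append_nil]
      rw [Lout_node, Rout_node, Lout_node, Rout_node, List.map_map, List.map_map]
      have hsz : ∀ g ∈ L, sizeOf g ≤ N := by
        intro g hg
        have h1 := List.sizeOf_lt_of_mem hg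
        have h2 : sizeOf (WT.node L R) = 1 + sizeOf L + sizeOf R := by simp
        omega
      have hsz' : ∀ g ∈ R, sizeOf g ≤ N := by
        intro g hg
        have h1 := List.sizeOf_lt_of_mem hg
        have h2 : sizeOf (WT.node L R) = 1 + sizeOf L + sizeOf R := by simp
        omega
      constructor
      · have : L.map (Rout ∘ (·.add (int n))) = (L.map Rout).map (· + n) := by
          rw [List.map_map]
          exact List.map_congr_left fun g hg => (ih g (hsz g hg) p₀ (hLp g hg) n).2
        rw [this, lmax_add (by simpa using hLne)]
      · have : R.map (Lout ∘ (·.add (int n))) = (R.map Lout).map (· + n) := by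
          rw [List.map_map]
          exact List.map_congr_left fun g hg => (ih g (hsz' g hg) p₀ (hRp g hg) n).1
        rw [this, lmin_add (by simpa using hRne)]

theorem int_add_out : ∀ (N : ℕ) (H : WT), sizeOf H ≤ N → ∀ (p : Bool), IsWT H p → ∀ n : ℤ,
    ((int n).add H).Lout = n + H.Lout ∧ ((int n).add H).Rout = n + H.Rout := by
  intro N
  induction N with
  | zero => intro H hs; cases H <;> simp at hs
  | succ N ih =>
    intro H hs p hH n
    cases hH with
    | int m => rw [int_add_int]; simp [Lout_int, Rout_int]
    | @node L R p₀ hLne hRne hLp hRp =>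
      rw [add_node]
      simp only [lopts, ropts, List.map_nil, List.nil_append]
      rw [Lout_node, Rout_node, Lout_node, Rout_node, List.map_map, List.map_map]
      have hsz : ∀ g ∈ L, sizeOf g ≤ N := by
        intro g hg
        have h1 := List.sizeOf_lt_of_mem hg
        have h2 : sizeOf (WT.node L R) = 1 + sizeOf L + sizeOf R := by simp
        omega
      have hsz' : ∀ g ∈ R, sizeOf g ≤ N := by
        intro g hg
        have h1 := List.sizeOf_lt_of_mem hg
        have h2 : sizeOf (WT.node L R) = 1 + sizeOf L + sizeOf R := by simp
        omega
      constructor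
      · have : L.map (Rout ∘ ((int n).add ·)) = (L.map Rout).map (· + n) := by
          rw [List.map_map]
          refine List.map_congr_left fun g hg => ?_
          have := (ih g (hsz g hg) p₀ (hLp g hg) n).2
          simpa [add_comm] using this
        rw [this, lmax_add (by simpa using hLne)]
        ring
      · have : R.map (Lout ∘ ((int n).add ·)) = (R.map Lout).map (· + n) := by
          rw [List.map_map]
          refine List.map_congr_left fun g hg => ?_
          have := (ih g (hsz' g hg) p₀ (hRp g hg) n).1
          simpa [add_comm] using this
        rw [this, lmin_add (by simpa using hRne)]
        ring

end WT
namespace WT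

theorem sizeOf_node (L R : List WT) : sizeOf (WT.node L R) = 1 + sizeOf L + sizeOf R := by simp

theorem isWT_add : ∀ (N : ℕ) (G H : WT), sizeOf G + sizeOf H ≤ N → ∀ (p q : Bool),
    IsWT G p → IsWT H q → IsWT (G.add H) (xor p q) := by
  intro N
  induction N with
  | zero => intro G H hs; cases G <;> simp at hs
  | succ N ih =>
    intro G H hs p q hG hH
    cases hG with
    | int m =>
      cases hH with
      | int n => rw [int_add_int]; exact IsWT.int (m + n)
      | @node L R q₀ hLne hRne hLp hRp =>
        rw [add_node]
        simp only [lopts, ropts, List.map_nil, List.nil_append]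
        have hb : xor false (!q₀) = !(xor false q₀) := by cases q₀ <;> rfl
        rw [hb]
        refine IsWT.node (by simpa using hLne) (by simpa using hRne) ?_ ?_ <;>
        · intro g hg
          rw [List.mem_map] at hg
          obtain ⟨x, hx, rfl⟩ := hg
          refine ih (int m) x ?_ false q₀ (IsWT.int m) (by first | exact hLp x hx | exact hRp x hx)
          have h1 := List.sizeOf_lt_of_mem hx
          have h2 := sizeOf_node L R
          simp at hs ⊢
          omega
    | @node L R p₀ hLne hRne hLp hRp =>
      cases hH with
      | int n =>
        rw [node_add]
        simp only [lopts, ropts, List.map_nil, List.append_nil]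
        have hb : xor (!p₀) false = !(xor p₀ false) := by cases p₀ <;> rfl
        rw [hb]
        refine IsWT.node (by simpa using hLne) (by simpa using hRne) ?_ ?_ <;>
        · intro g hg
          rw [List.mem_map] at hg
          obtain ⟨x, hx, rfl⟩ := hg
          refine ih x (int n) ?_ p₀ false (by first | exact hLp x hx | exact hRp x hx) (IsWT.int n)
          have h1 := List.sizeOf_lt_of_mem hx
          have h2 := sizeOf_node L R
          simp at hs ⊢
          omega
      | @node L' R' q₀ hLne' hRne' hLp' hRp' =>
        rw [node_add]
        simp only [lopts, ropts]
        have hb : xor (!p₀) (!q₀) = !(xor p₀ (!q₀)) := by cases p₀ <;> cases q₀ <;> rfl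
        have hb2 : xor (!p₀) q₀ = xor p₀ (!q₀) := by cases p₀ <;> cases q₀ <;> rfl
        rw [hb]
        have hszG := sizeOf_node L R
        have hszH := sizeOf_node L' R'
        refine IsWT.node (by simp [hLne]) (by simp [hRne]) ?_ ?_ <;>
        · intro g hg
          rw [List.mem_append] at hg
          rcases hg with hg | hg <;> rw [List.mem_map] at hg <;> obtain ⟨x, hx, rfl⟩ := hg
          · refine ih x (node L' R') ?_ p₀ (!q₀)
              (by first | exact hLp x hx | exact hRp x hx) (IsWT.node hLne' hRne' hLp' hRp')
            have h1 := List.sizeOf_lt_of_mem hx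
            omega
          · rw [← hb2]
            refine ih (node L R) x ?_ (!p₀) q₀
              (IsWT.node hLne hRne hLp hRp) (by first | exact hLp' x hx | exact hRp' x hx)
            have h1 := List.sizeOf_lt_of_mem hx
            omega

theorem par_of_isWT : ∀ (N : ℕ) (G : WT), sizeOf G ≤ N → ∀ (p : Bool), IsWT G p → G.par = p := by
  intro N
  induction N with
  | zero => intro G hs; cases G <;> simp at hs
  | succ N ih =>
    intro G hs p hG
    cases hG with
    | int n => rfl
    | @node L R p₀ hLne hRne hLp hRp =>
      cases L with
      | nil => exact absurd rfl hLne
      | cons g gs =>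
        show (!(par g)) = !p₀
        have h2 := sizeOf_node (g :: gs) R
        have : par g = p₀ := by
          refine ih g ?_ p₀ (hLp g (by simp))
          have : sizeOf g < sizeOf (g :: gs) := by simp; omega
          omega
        rw [this]

def Quiet (G : WT) : Prop := ∀ K : WT, Subgame K G → IsWT K false → K.Rout ≤ K.Lout

theorem Quiet.of_mem_lopts {G g : WT} (h : Quiet G) (hg : g ∈ G.lopts) : Quiet g := by
  intro K hK hKp
  cases G with
  | int n => simp [lopts] at hg
  | node L R => exact h K (Subgame.left hg hK) hKp

theorem Quiet.of_mem_ropts {G g : WT} (h : Quiet G) (hg : g ∈ G.ropts) : Quiet g := by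
  intro K hK hKp
  cases G with
  | int n => simp [ropts] at hg
  | node L R => exact h K (Subgame.right hg hK) hKp

/-- List of all subgames. -/
def subs : WT → List WT
  | int n => [int n]
  | node L R =>
    node L R :: (((WT.node L R).lopts.attach.map fun g => subs g.1).flatten ++
      ((WT.node L R).ropts.attach.map fun g => subs g.1).flatten)
termination_by G => sizeOf G
decreasing_by
  all_goals
    first
      | exact sizeOf_lt_of_mem_lopts g.2
      | exact sizeOf_lt_of_mem_ropts g.2

theorem mem_subs_of_subgame {H G : WT} (h : Subgame H G) : H ∈ subs G := by
  induction h with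
  | refl =>
    rw [subs.eq_def]
    cases H with
    | int n => exact List.mem_cons_self
    | node L R => exact List.mem_cons_self
  | @left G' L R hmem hsub ih =>
    rw [subs.eq_def]
    refine List.mem_cons_of_mem _ (List.mem_append_left _ ?_)
    rw [List.mem_flatten]
    refine ⟨subs G', ?_, ih⟩
    rw [List.mem_map]
    exact ⟨⟨G', hmem⟩, List.mem_attach _ _, rfl⟩
  | @right G' L R hmem hsub ih =>
    rw [subs.eq_def]
    refine List.mem_cons_of_mem _ (List.mem_append_right _ ?_)
    rw [List.mem_flatten]
    refine ⟨subs G', ?_, ih⟩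
    rw [List.mem_map]
    exact ⟨⟨G', hmem⟩, List.mem_attach _ _, rfl⟩

theorem quiet_of_gap {g : WT} (h : g.gap false = ((0 : ℤ) : WithBot ℤ)) : Quiet g := by
  intro K hK hKp
  have hmem : ((K.Rout - K.Lout : ℤ) : WithBot ℤ) ∈
      {x : WithBot ℤ | ∃ H : WT, Subgame H g ∧ IsWT H false ∧ x = ((H.Rout - H.Lout : ℤ) : WithBot ℤ)} :=
    ⟨K, hK, hKp, rfl⟩
  have hsubset : {x : WithBot ℤ | ∃ H : WT, Subgame H g ∧ IsWT H false ∧ x = ((H.Rout - H.Lout : ℤ) : WithBot ℤ)}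
      ⊆ ↑(((subs g).map fun H => ((H.Rout - H.Lout : ℤ) : WithBot ℤ)).toFinset) := by
    rintro x ⟨H, hsub, _, rfl⟩
    simp only [Finset.coe_sort_coe, List.coe_toFinset, Set.mem_setOf_eq, List.mem_map]
    exact ⟨H, mem_subs_of_subgame hsub, rfl⟩
  have hfin := Set.Finite.subset (Finset.finite_toSet _) hsubset
  have hle := le_csSup hfin.bddAbove hmem
  rw [← gap, h] at hle
  have : (K.Rout - K.Lout : ℤ) ≤ 0 := by exact_mod_cast hle
  omega

end WT
namespace WT

theorem isWT_node_inv {L R : List WT} {p : Bool} (h : IsWT (node L R) p) :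
    L ≠ [] ∧ R ≠ [] ∧ (∀ g ∈ L, IsWT g (!p)) ∧ (∀ g ∈ R, IsWT g (!p)) := by
  cases h with
  | node hLne hRne hLp hRp =>
    rw [Bool.not_not]
    exact ⟨hLne, hRne, hLp, hRp⟩

theorem key : ∀ (N : ℕ) (K X : WT), sizeOf K + sizeOf X ≤ N → Quiet K → X.Wt →
    ((IsWT K false →
        K.Rout + X.Lout ≤ (K.add X).Lout ∧ (K.add X).Lout ≤ K.Lout + X.Lout ∧
        K.Rout + X.Rout ≤ (K.add X).Rout ∧ (K.add X).Rout ≤ K.Lout + X.Rout) ∧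
     (IsWT K true →
        (K.add X).Rout ≤ K.Rout + X.Lout ∧ K.Lout + X.Rout ≤ (K.add X).Lout)) := by
  intro N
  induction N with
  | zero => intro K X hs; cases K <;> simp at hs
  | succ N ih =>
    intro K X hs hQ hX
    obtain ⟨q, hXq⟩ := hX
    cases K with
    | int m =>
      refine ⟨fun _ => ?_, fun hK => by cases hK⟩
      have h := int_add_out (sizeOf X) X le_rfl q hXq m
      rw [Lout_int, Rout_int, h.1, h.2]
      refine ⟨le_rfl, le_rfl, le_rfl, le_rfl⟩
    | node L R =>
      have hszK := sizeOf_node L R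
      constructor
      · -- even part
        intro hK
        obtain ⟨hLne, hRne, hLp, hRp⟩ := isWT_node_inv hK
        cases X with
        | int n =>
          have h := add_int_out (sizeOf (node L R)) (node L R) le_rfl false hK n
          have hQK := hQ (node L R) (Subgame.refl _) hK
          rw [Lout_int, Rout_int, h.1, h.2]
          refine ⟨?_, ?_, ?_, ?_⟩ <;> omega
        | node XL XR =>
          obtain ⟨hXLne, hXRne, hXLp, hXRp⟩ := isWT_node_inv hXq
          have hszX := sizeOf_node XL XR
          have hsL : ((node L R).add (node XL XR)).Lout
              = lmax ((L.map fun g => (g.add (node XL XR)).Rout)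
                  ++ (XL.map fun x => ((node L R).add x).Rout)) := by
            rw [node_add, Lout_node]
            simp only [lopts, List.map_append, List.map_map]
            rfl
          have hsR : ((node L R).add (node XL XR)).Rout
              = lmin ((R.map fun g => (g.add (node XL XR)).Lout)
                  ++ (XR.map fun x => ((node L R).add x).Lout)) := by
            rw [node_add, Rout_node]
            simp only [ropts, List.map_append, List.map_map]
            rfl
          refine ⟨?_, ?_, ?_, ?_⟩
          · -- lower-L
            have hmem : (node XL XR).Lout ∈ XL.map Rout := by
              rw [Lout_node]; exact lmax_mem (by simp [hXLne])
            obtain ⟨xl, hxl, hxleq⟩ := List.mem_map.mp hmem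
            have hsz : sizeOf (node L R) + sizeOf xl ≤ N := by
              have := sizeOf_lt_of_mem_lopts (G := node XL XR) (g := xl) hxl
              omega
            have hIH := ((ih (node L R) xl hsz hQ ⟨!q, hXLp xl hxl⟩).1 hK).2.2.1
            calc (node L R).Rout + (node XL XR).Lout
                = (node L R).Rout + xl.Rout := by rw [hxleq]
              _ ≤ ((node L R).add xl).Rout := hIH
              _ ≤ _ := by
                  rw [hsL]
                  exact le_lmax (List.mem_append_right _ (List.mem_map.mpr ⟨xl, hxl, rfl⟩))
          · -- upper-L
            rw [hsL]
            refine lmax_le (by simp [hLne]) ?_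
            intro y hy
            rcases List.mem_append.mp hy with hy | hy <;>
              obtain ⟨z, hz, rfl⟩ := List.mem_map.mp hy
            · have hsz : sizeOf z + sizeOf (node XL XR) ≤ N := by
                have := sizeOf_lt_of_mem_lopts (G := node L R) (g := z) hz
                omega
              have hO1 := ((ih z (node XL XR) hsz
                  (hQ.of_mem_lopts (show z ∈ (node L R).lopts from hz)) ⟨q, hXq⟩).2 (hLp z hz)).1
              have hzK : z.Rout ≤ (node L R).Lout := by
                rw [Lout_node]; exact le_lmax (List.mem_map.mpr ⟨z, hz, rfl⟩)
              omega
            · have hsz : sizeOf (node L R) + sizeOf z ≤ N := by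
                have := sizeOf_lt_of_mem_lopts (G := node XL XR) (g := z) hz
                omega
              have hIH := ((ih (node L R) z hsz hQ ⟨!q, hXLp z hz⟩).1 hK).2.2.2
              have hzX : z.Rout ≤ (node XL XR).Lout := by
                rw [Lout_node]; exact le_lmax (List.mem_map.mpr ⟨z, hz, rfl⟩)
              omega
          · -- lower-R
            rw [hsR]
            refine le_lmin (by simp [hRne]) ?_
            intro y hy
            rcases List.mem_append.mp hy with hy | hy <;>
              obtain ⟨z, hz, rfl⟩ := List.mem_map.mp hy
            · have hsz : sizeOf z + sizeOf (node XL XR) ≤ N := by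
                have := sizeOf_lt_of_mem_ropts (G := node L R) (g := z) hz
                omega
              have hO2 := ((ih z (node XL XR) hsz
                  (hQ.of_mem_ropts (show z ∈ (node L R).ropts from hz)) ⟨q, hXq⟩).2 (hRp z hz)).2
              have hzK : (node L R).Rout ≤ z.Lout := by
                rw [Rout_node]; exact lmin_le (List.mem_map.mpr ⟨z, hz, rfl⟩)
              omega
            · have hsz : sizeOf (node L R) + sizeOf z ≤ N := by
                have := sizeOf_lt_of_mem_ropts (G := node XL XR) (g := z) hz
                omega
              have hIH := ((ih (node L R) z hsz hQ ⟨!q, hXRp z hz⟩).1 hK).1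
              have hzX : (node XL XR).Rout ≤ z.Lout := by
                rw [Rout_node]; exact lmin_le (List.mem_map.mpr ⟨z, hz, rfl⟩)
              omega
          · -- upper-R
            have hmem : (node XL XR).Rout ∈ XR.map Lout := by
              rw [Rout_node]; exact lmin_mem (by simp [hXRne])
            obtain ⟨xr, hxr, hxreq⟩ := List.mem_map.mp hmem
            have hsz : sizeOf (node L R) + sizeOf xr ≤ N := by
              have := sizeOf_lt_of_mem_ropts (G := node XL XR) (g := xr) hxr
              omega
            have hIH := ((ih (node L R) xr hsz hQ ⟨!q, hXRp xr hxr⟩).1 hK).2.1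
            calc ((node L R).add (node XL XR)).Rout
                ≤ ((node L R).add xr).Lout := by
                  rw [hsR]
                  exact lmin_le (List.mem_append_right _ (List.mem_map.mpr ⟨xr, hxr, rfl⟩))
              _ ≤ (node L R).Lout + xr.Lout := hIH
              _ = (node L R).Lout + (node XL XR).Rout := by rw [hxreq]
      · -- odd part
        intro hK
        obtain ⟨hLne, hRne, hLp, hRp⟩ := isWT_node_inv hK
        have hsL : ((node L R).add X).Lout
            = lmax ((L.map fun g => (g.add X).Rout)
                ++ (X.lopts.map fun x => ((node L R).add x).Rout)) := by
          rw [node_add, Lout_node]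
          simp only [List.map_append, List.map_map]
          rfl
        have hsR : ((node L R).add X).Rout
            = lmin ((R.map fun g => (g.add X).Lout)
                ++ (X.ropts.map fun x => ((node L R).add x).Lout)) := by
          rw [node_add, Rout_node]
          simp only [List.map_append, List.map_map]
          rfl
        constructor
        · -- O1
          have hmem : (node L R).Rout ∈ R.map Lout := by
            rw [Rout_node]; exact lmin_mem (by simp [hRne])
          obtain ⟨hr, hhr, heq⟩ := List.mem_map.mp hmem
          have hsz : sizeOf hr + sizeOf X ≤ N := by
            have := sizeOf_lt_of_mem_ropts (G := node L R) (g := hr) hhr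
            omega
          have hIH := ((ih hr X hsz (hQ.of_mem_ropts (show hr ∈ (node L R).ropts from hhr))
              ⟨q, hXq⟩).1 (hRp hr hhr)).2.1
          calc ((node L R).add X).Rout
              ≤ (hr.add X).Lout := by
                rw [hsR]
                exact lmin_le (List.mem_append_left _ (List.mem_map.mpr ⟨hr, hhr, rfl⟩))
            _ ≤ hr.Lout + X.Lout := hIH
            _ = (node L R).Rout + X.Lout := by rw [heq]
        · -- O2
          have hmem : (node L R).Lout ∈ L.map Rout := by
            rw [Lout_node]; exact lmax_mem (by simp [hLne])
          obtain ⟨hl, hhl, heq⟩ := List.mem_map.mp hmem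
          have hsz : sizeOf hl + sizeOf X ≤ N := by
            have := sizeOf_lt_of_mem_lopts (G := node L R) (g := hl) hhl
            omega
          have hIH := ((ih hl X hsz (hQ.of_mem_lopts (show hl ∈ (node L R).lopts from hhl))
              ⟨q, hXq⟩).1 (hLp hl hhl)).2.2.1
          calc (node L R).Lout + X.Rout
              = hl.Rout + X.Rout := by rw [heq]
            _ ≤ (hl.add X).Rout := hIH
            _ ≤ ((node L R).add X).Lout := by
                rw [hsL]
                exact le_lmax (List.mem_append_left _ (List.mem_map.mpr ⟨hl, hhl, rfl⟩))

end WT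
namespace WT

theorem main_aux (G : WT) (hG : IsWT G false)
    (hQL : ∀ g ∈ G.lopts, Quiet g) (hQR : ∀ g ∈ G.ropts, Quiet g)
    (hout : G.Lout ≤ G.Rout) :
    ∀ (N : ℕ) (X : WT), sizeOf X ≤ N → ∀ q, IsWT X q →
      ((q = true → (G.add X).Lout = G.Rout + X.Lout ∧ (G.add X).Rout = G.Lout + X.Rout) ∧
       (q = false → (G.add X).Rout = G.Rout + X.Rout ∧ (G.add X).Lout = G.Lout + X.Lout)) := by
  intro N
  induction N with
  | zero => intro X hs; cases X <;> simp at hs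
  | succ N ihN =>
    intro X hsX q hXq
    cases G with
    | int m =>
      have h := int_add_out (sizeOf X) X le_rfl q hXq m
      rw [Lout_int, Rout_int] at *
      constructor <;> intro hq <;> constructor <;> omega
    | node L R =>
      obtain ⟨hLne, hRne, hLp, hRp⟩ := isWT_node_inv hG
      have hszG := sizeOf_node L R
      cases X with
      | int n =>
        constructor
        · intro hq; subst hq; cases hXq
        · intro _
          have h := add_int_out (sizeOf (node L R)) (node L R) le_rfl false hG n
          rw [Lout_int, Rout_int, h.1, h.2]
          exact ⟨rfl, rfl⟩
      | node XL XR =>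
        obtain ⟨hXLne, hXRne, hXLp, hXRp⟩ := isWT_node_inv hXq
        have hszX := sizeOf_node XL XR
        have hsL : ((node L R).add (node XL XR)).Lout
            = lmax ((L.map fun g => (g.add (node XL XR)).Rout)
                ++ (XL.map fun x => ((node L R).add x).Rout)) := by
          rw [node_add, Lout_node]
          simp only [lopts, List.map_append, List.map_map]
          rfl
        have hsR : ((node L R).add (node XL XR)).Rout
            = lmin ((R.map fun g => (g.add (node XL XR)).Lout)
                ++ (XR.map fun x => ((node L R).add x).Lout)) := by
          rw [node_add, Rout_node]
          simp only [ropts, List.map_append, List.map_map]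
          rfl
        -- facts reusable in both parities
        have hO1 : ∀ g ∈ L, (g.add (node XL XR)).Rout ≤ g.Rout + (node XL XR).Lout := by
          intro g hg
          exact ((key (sizeOf g + sizeOf (node XL XR)) g (node XL XR) le_rfl
            (hQL g hg) ⟨q, hXq⟩).2 (hLp g hg)).1
        have hO2 : ∀ g ∈ R, g.Lout + (node XL XR).Rout ≤ (g.add (node XL XR)).Lout := by
          intro g hg
          exact ((key (sizeOf g + sizeOf (node XL XR)) g (node XL XR) le_rfl
            (hQR g hg) ⟨q, hXq⟩).2 (hRp g hg)).2
        have hgL : ∀ g ∈ L, g.Rout ≤ (node L R).Lout := by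
          intro g hg; rw [Lout_node]; exact le_lmax (List.mem_map.mpr ⟨g, hg, rfl⟩)
        have hgR : ∀ g ∈ R, (node L R).Rout ≤ g.Lout := by
          intro g hg; rw [Rout_node]; exact lmin_le (List.mem_map.mpr ⟨g, hg, rfl⟩)
        have hxL : ∀ x ∈ XL, x.Rout ≤ (node XL XR).Lout := by
          intro x hx; rw [Lout_node]; exact le_lmax (List.mem_map.mpr ⟨x, hx, rfl⟩)
        have hxR : ∀ x ∈ XR, (node XL XR).Rout ≤ x.Lout := by
          intro x hx; rw [Rout_node]; exact lmin_le (List.mem_map.mpr ⟨x, hx, rfl⟩)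
        have hihL : ∀ x ∈ XL, sizeOf x ≤ N := by
          intro x hx
          have := sizeOf_lt_of_mem_lopts (G := node XL XR) (g := x) hx
          omega
        have hihR : ∀ x ∈ XR, sizeOf x ≤ N := by
          intro x hx
          have := sizeOf_lt_of_mem_ropts (G := node XL XR) (g := x) hx
          omega
        have hmemL : ∃ xl ∈ XL, xl.Rout = (node XL XR).Lout := by
          have : (node XL XR).Lout ∈ XL.map Rout := by
            rw [Lout_node]; exact lmax_mem (by simp [hXLne])
          obtain ⟨xl, hxl, heq⟩ := List.mem_map.mp this
          exact ⟨xl, hxl, heq⟩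
        have hmemR : ∃ xr ∈ XR, xr.Lout = (node XL XR).Rout := by
          have : (node XL XR).Rout ∈ XR.map Lout := by
            rw [Rout_node]; exact lmin_mem (by simp [hXRne])
          obtain ⟨xr, hxr, heq⟩ := List.mem_map.mp this
          exact ⟨xr, hxr, heq⟩
        constructor
        · -- q = true : X odd, options even
          intro hq; subst hq
          constructor
          · -- Lout (G+X) = Rout G + Lout X
            refine le_antisymm ?_ ?_
            · rw [hsL]
              refine lmax_le (by simp [hLne]) ?_
              intro y hy
              rcases List.mem_append.mp hy with hy | hy <;>
                obtain ⟨z, hz, rfl⟩ := List.mem_map.mp hy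
              · have h1 := hO1 z hz
                have h2 := hgL z hz
                omega
              · have hIH := ((ihN z (hihL z hz) false (by simpa using hXLp z hz)).2 rfl).1
                have h2 := hxL z hz
                omega
            · obtain ⟨xl, hxl, heq⟩ := hmemL
              have hIH := ((ihN xl (hihL xl hxl) false (by simpa using hXLp xl hxl)).2 rfl).1
              calc (node L R).Rout + (node XL XR).Lout
                  = ((node L R).add xl).Rout := by rw [hIH, heq]
                _ ≤ _ := by
                    rw [hsL]
                    exact le_lmax (List.mem_append_right _ (List.mem_map.mpr ⟨xl, hxl, rfl⟩))
          · -- Rout (G+X) = Lout G + Rout X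
            refine le_antisymm ?_ ?_
            · obtain ⟨xr, hxr, heq⟩ := hmemR
              have hIH := ((ihN xr (hihR xr hxr) false (by simpa using hXRp xr hxr)).2 rfl).2
              calc ((node L R).add (node XL XR)).Rout
                  ≤ ((node L R).add xr).Lout := by
                    rw [hsR]
                    exact lmin_le (List.mem_append_right _ (List.mem_map.mpr ⟨xr, hxr, rfl⟩))
                _ = (node L R).Lout + (node XL XR).Rout := by rw [hIH, heq]
            · rw [hsR]
              refine le_lmin (by simp [hRne]) ?_
              intro y hy
              rcases List.mem_append.mp hy with hy | hy <;>
                obtain ⟨z, hz, rfl⟩ := List.mem_map.mp hy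
              · have h1 := hO2 z hz
                have h2 := hgR z hz
                omega
              · have hIH := ((ihN z (hihR z hz) false (by simpa using hXRp z hz)).2 rfl).2
                have h2 := hxR z hz
                omega
        · -- q = false : X even, options odd
          intro hq; subst hq
          constructor
          · -- Rout (G+X) = Rout G + Rout X
            refine le_antisymm ?_ ?_
            · obtain ⟨xr, hxr, heq⟩ := hmemR
              have hIH := ((ihN xr (hihR xr hxr) true (by simpa using hXRp xr hxr)).1 rfl).1
              calc ((node L R).add (node XL XR)).Rout
                  ≤ ((node L R).add xr).Lout := by
                    rw [hsR]
                    exact lmin_le (List.mem_append_right _ (List.mem_map.mpr ⟨xr, hxr, rfl⟩))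
                _ = (node L R).Rout + (node XL XR).Rout := by rw [hIH, heq]
            · rw [hsR]
              refine le_lmin (by simp [hRne]) ?_
              intro y hy
              rcases List.mem_append.mp hy with hy | hy <;>
                obtain ⟨z, hz, rfl⟩ := List.mem_map.mp hy
              · have h1 := hO2 z hz
                have h2 := hgR z hz
                omega
              · have hIH := ((ihN z (hihR z hz) true (by simpa using hXRp z hz)).1 rfl).1
                have h2 := hxR z hz
                omega
          · -- Lout (G+X) = Lout G + Lout X
            refine le_antisymm ?_ ?_
            · rw [hsL]
              refine lmax_le (by simp [hLne]) ?_
              intro y hy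
              rcases List.mem_append.mp hy with hy | hy <;>
                obtain ⟨z, hz, rfl⟩ := List.mem_map.mp hy
              · have h1 := hO1 z hz
                have h2 := hgL z hz
                omega
              · have hIH := ((ihN z (hihL z hz) true (by simpa using hXLp z hz)).1 rfl).2
                have h2 := hxL z hz
                omega
            · obtain ⟨xl, hxl, heq⟩ := hmemL
              have hIH := ((ihN xl (hihL xl hxl) true (by simpa using hXLp xl hxl)).1 rfl).2
              calc (node L R).Lout + (node XL XR).Lout
                  = ((node L R).add xl).Rout := by rw [hIH, heq]
                _ ≤ _ := by
                    rw [hsL]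
                    exact le_lmax (List.mem_append_right _ (List.mem_map.mpr ⟨xl, hxl, rfl⟩))

end WT
/-- if G is even-tempered, every option of G has gap₀ = 0, and L(G) ≤ R(G),
then G ≈₊ R(G) and G ≈₋ L(G): Lf(G+X) = R(G) + Lf(X) and Rf(G+X) = L(G) + Rf(X) for all X. -/
theorem gap_rule (G : WT) (hG : WT.IsWT G false)
    (hL : ∀ g ∈ G.lopts, g.gap false = ((0 : ℤ) : WithBot ℤ))
    (hR : ∀ g ∈ G.ropts, g.gap false = ((0 : ℤ) : WithBot ℤ))
    (hout : G.Lout ≤ G.Rout) :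
    ∀ X : WT, X.Wt → (G.add X).Lf = G.Rout + X.Lf ∧ (G.add X).Rf = G.Lout + X.Rf := by
  intro X hX
  obtain ⟨q, hXq⟩ := hX
  have hQL : ∀ g ∈ G.lopts, WT.Quiet g := fun g hg => WT.quiet_of_gap (hL g hg)
  have hQR : ∀ g ∈ G.ropts, WT.Quiet g := fun g hg => WT.quiet_of_gap (hR g hg)
  have hmain := WT.main_aux G hG hQL hQR hout (sizeOf X) X le_rfl q hXq
  have hparX : X.par = q := WT.par_of_isWT (sizeOf X) X le_rfl q hXq
  have hsum : WT.IsWT (G.add X) q := by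
    have := WT.isWT_add (sizeOf G + sizeOf X) G X le_rfl false q hG hXq
    simpa using this
  have hparS : (G.add X).par = q := WT.par_of_isWT (sizeOf (G.add X)) (G.add X) le_rfl q hsum
  rw [WT.Lf, WT.Rf, WT.Lf, WT.Rf, hparX, hparS]
  cases q with
  | true => exact hmain.1 rfl
  | false => exact ⟨(hmain.2 rfl).1, (hmain.2 rfl).2⟩
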